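/- arXiv:2201.00929 — 3 statements merged into one kernel-verified Lean document; each statement's English description precedes it below -/
import Mathlib

section
/- Let L be the weighted Laplacian of a connected weighted graph on n ≥ 2 vertices whose edge weights are nonnegative and sum to 1. Then for every vertex k, L†_{kk} ≥ (1/L_{kk})·(1 − 1/n)², where L_{kk} is the weighted degree of k. -/
def lapMat {n : ℕ} (B : Matrix (Fin n) (Fin n) ℝ) : Matrix (Fin n) (Fin n) ℝ :=
  Matrix.of fun i j => if i = j then ∑ k, B i k else -B i j

def IsMoorePenrose {n : ℕ} (L M : Matrix (Fin n) (Fin n) ℝ) : Prop :=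
  L * M * L = L ∧ M * L * M = M ∧ (L * M).transpose = L * M ∧ (M * L).transpose = M * L


open Matrix

lemma lap_mulVec {n : ℕ} (B : Matrix (Fin n) (Fin n) ℝ) (x : Fin n → ℝ) (i : Fin n) :
    (lapMat B *ᵥ x) i = (∑ j, B i j * (x i - x j)) + B i i * x i := by
  have h : ∀ j : Fin n, lapMat B i j * x j
      = (if i = j then ((∑ k, B i k) + B i j) * x j else 0) - B i j * x j := by
    intro j
    by_cases hij : i = j
    · subst hij; simp [lapMat]; ring
    · simp [lapMat, hij]
  show ∑ j, lapMat B i j * x j = _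
  rw [Finset.sum_congr rfl fun j _ => h j, Finset.sum_sub_distrib,
    Finset.sum_ite_eq Finset.univ i _]
  simp [mul_sub, Finset.sum_sub_distrib, ← Finset.sum_mul]
  ring

lemma quad_ident {n : ℕ} (B : Matrix (Fin n) (Fin n) ℝ) (hsym : B.IsSymm) (x : Fin n → ℝ) :
    x ⬝ᵥ (lapMat B *ᵥ x)
      = (∑ i, ∑ j, B i j * (x i - x j)^2) / 2 + ∑ i, B i i * (x i)^2 := by
  have h1 : x ⬝ᵥ (lapMat B *ᵥ x)
      = (∑ i, ∑ j, B i j * (x i * (x i - x j))) + ∑ i, B i i * (x i)^2 := by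
    show ∑ i, x i * (lapMat B *ᵥ x) i = _
    rw [← Finset.sum_add_distrib]
    refine Finset.sum_congr rfl fun i _ => ?_
    rw [lap_mulVec, mul_add, Finset.mul_sum]
    congr 1
    · exact Finset.sum_congr rfl fun j _ => by ring
    · ring
  have hswap : (∑ i, ∑ j, B i j * (x i * (x i - x j)))
      = ∑ i, ∑ j, B i j * (x j * (x j - x i)) := by
    rw [Finset.sum_comm]
    refine Finset.sum_congr rfl fun j _ => Finset.sum_congr rfl fun i _ => ?_
    rw [hsym.apply]
  have h2 : (∑ i, ∑ j, B i j * (x i * (x i - x j)))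
      = (∑ i, ∑ j, B i j * (x i - x j)^2) / 2 := by
    have : (∑ i, ∑ j, B i j * (x i - x j)^2)
        = (∑ i, ∑ j, B i j * (x i * (x i - x j)))
          + ∑ i, ∑ j, B i j * (x j * (x j - x i)) := by
      rw [← Finset.sum_add_distrib]
      refine Finset.sum_congr rfl fun i _ => ?_
      rw [← Finset.sum_add_distrib]
      exact Finset.sum_congr rfl fun j _ => by ring
    rw [this, ← hswap]; ring
  rw [h1, h2]

lemma lap_psd {n : ℕ} (B : Matrix (Fin n) (Fin n) ℝ) (hsym : B.IsSymm)
    (hnonneg : ∀ i j, 0 ≤ B i j) (x : Fin n → ℝ) :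
    0 ≤ x ⬝ᵥ (lapMat B *ᵥ x) := by
  rw [quad_ident B hsym x]
  have h1 : (0:ℝ) ≤ ∑ i, ∑ j, B i j * (x i - x j)^2 :=
    Finset.sum_nonneg fun i _ => Finset.sum_nonneg fun j _ =>
      mul_nonneg (hnonneg i j) (sq_nonneg _)
  have h2 : (0:ℝ) ≤ ∑ i, B i i * (x i)^2 :=
    Finset.sum_nonneg fun i _ => mul_nonneg (hnonneg i i) (sq_nonneg _)
  linarith

lemma lap_ker {n : ℕ} (B : Matrix (Fin n) (Fin n) ℝ) (hsym : B.IsSymm)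
    (hnonneg : ∀ i j, 0 ≤ B i j)
    (hconn : (SimpleGraph.fromRel (fun i j => 0 < B i j)).Connected)
    (x : Fin n → ℝ) (hx : lapMat B *ᵥ x = 0) :
    ∀ i j, x i = x j := by
  have h0 : x ⬝ᵥ (lapMat B *ᵥ x) = 0 := by rw [hx]; simp
  rw [quad_ident B hsym x] at h0
  have h1 : (0:ℝ) ≤ ∑ i, ∑ j, B i j * (x i - x j)^2 :=
    Finset.sum_nonneg fun i _ => Finset.sum_nonneg fun j _ =>
      mul_nonneg (hnonneg i j) (sq_nonneg _)
  have h2 : (0:ℝ) ≤ ∑ i, B i i * (x i)^2 :=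
    Finset.sum_nonneg fun i _ => mul_nonneg (hnonneg i i) (sq_nonneg _)
  have hzero : ∑ i, ∑ j, B i j * (x i - x j)^2 = 0 := by linarith
  have hterm : ∀ i j : Fin n, B i j * (x i - x j)^2 = 0 := by
    intro i j
    have hi := (Finset.sum_eq_zero_iff_of_nonneg (fun i _ =>
      Finset.sum_nonneg fun j _ => mul_nonneg (hnonneg i j) (sq_nonneg _))).1 hzero i
      (Finset.mem_univ i)
    exact (Finset.sum_eq_zero_iff_of_nonneg (fun j _ =>
      mul_nonneg (hnonneg i j) (sq_nonneg _))).1 hi j (Finset.mem_univ j)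
  have hedge : ∀ i j : Fin n, 0 < B i j → x i = x j := by
    intro i j hb
    have := hterm i j
    have : (x i - x j)^2 = 0 := by
      rcases mul_eq_zero.1 this with h | h
      · exact absurd h (ne_of_gt hb)
      · exact h
    have := pow_eq_zero_iff (n := 2) (by norm_num) |>.1 this
    linarith
  intro i j
  obtain ⟨w⟩ := hconn.preconnected i j
  induction w with
  | nil => rfl
  | cons h p ih =>
    rw [SimpleGraph.fromRel_adj] at h
    rcases h.2 with hr | hr
    · exact (hedge _ _ hr).trans ih
    · exact ((hedge _ _ hr).symm).trans ih


lemma mp_unique {n : ℕ} (L M M' : Matrix (Fin n) (Fin n) ℝ)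
    (h : IsMoorePenrose L M) (h' : IsMoorePenrose L M') : M = M' := by
  obtain ⟨h1, h2, h3, h4⟩ := h
  obtain ⟨h1', h2', h3', h4'⟩ := h'
  have e1 : L * M = L * M' := by
    calc L * M = (L * M' * L) * M := by rw [h1']
    _ = (L * M') * (L * M) := by rw [mul_assoc (L * M') L M]
    _ = (L * M')ᵀ * (L * M)ᵀ := by rw [h3', h3]
    _ = ((L * M) * (L * M'))ᵀ := by rw [Matrix.transpose_mul (L * M) (L * M')]
    _ = ((L * M * L) * M')ᵀ := by rw [mul_assoc (L * M) L M']
    _ = (L * M')ᵀ := by rw [h1]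
    _ = L * M' := h3'
  have e2 : M * L = M' * L := by
    calc M * L = M * (L * M' * L) := by rw [h1']
    _ = (M * (L * M')) * L := by rw [← mul_assoc M (L * M') L]
    _ = ((M * L) * M') * L := by rw [← mul_assoc M L M']
    _ = (M * L) * (M' * L) := by rw [mul_assoc (M * L) M' L]
    _ = (M * L)ᵀ * (M' * L)ᵀ := by rw [h4, h4']
    _ = ((M' * L) * (M * L))ᵀ := by rw [Matrix.transpose_mul (M' * L) (M * L)]
    _ = (M' * (L * M * L))ᵀ := by congr 1; noncomm_ring
    _ = (M' * L)ᵀ := by rw [h1]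
    _ = M' * L := h4'
  calc M = M * L * M := h2.symm
  _ = (M' * L) * M := by rw [e2]
  _ = M' * (L * M) := mul_assoc _ _ _
  _ = M' * (L * M') := by rw [e1]
  _ = M' * L * M' := (mul_assoc _ _ _).symm
  _ = M' := h2'

lemma mp_transpose {n : ℕ} (L M : Matrix (Fin n) (Fin n) ℝ) (hL : Lᵀ = L)
    (h : IsMoorePenrose L M) : IsMoorePenrose L Mᵀ := by
  obtain ⟨h1, h2, h3, h4⟩ := h
  refine ⟨?_, ?_, ?_, ?_⟩
  · have := congrArg Matrix.transpose h1
    simpa [Matrix.transpose_mul, hL, mul_assoc] using this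
  · have := congrArg Matrix.transpose h2
    simpa [Matrix.transpose_mul, hL, mul_assoc] using this
  · show (L * Mᵀ)ᵀ = L * Mᵀ
    have hLM : L * Mᵀ = M * L := by
      calc L * Mᵀ = Lᵀ * Mᵀ := by rw [hL]
      _ = (M * L)ᵀ := by rw [Matrix.transpose_mul]
      _ = M * L := h4
    rw [Matrix.transpose_mul, Matrix.transpose_transpose, hL, ← hLM]
  · show (Mᵀ * L)ᵀ = Mᵀ * L
    have hML : Mᵀ * L = L * M := by
      calc Mᵀ * L = Mᵀ * Lᵀ := by rw [hL]
      _ = (L * M)ᵀ := by rw [Matrix.transpose_mul]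
      _ = L * M := h3
    rw [Matrix.transpose_mul, Matrix.transpose_transpose, hL, ← hML]


/-- if `L` is the Laplacian of a connected weighted graph on `n ≥ 2`
vertices whose nonnegative edge weights sum to `1` (so `∑ᵢ∑ⱼ Bᵢⱼ = 2`), then for every
vertex `k`, `L†ₖₖ ≥ (1 / Lₖₖ) (1 − 1/n)²`. -/
theorem stmt5 {n : ℕ} (hn : 2 ≤ n) (B : Matrix (Fin n) (Fin n) ℝ)
    (hsym : B.IsSymm) (hnonneg : ∀ i j, 0 ≤ B i j)
    (hsum : ∑ i, ∑ j, B i j = 2)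
    (hconn : (SimpleGraph.fromRel (fun i j => 0 < B i j)).Connected)
    (M : Matrix (Fin n) (Fin n) ℝ) (hM : IsMoorePenrose (lapMat B) M)
    (k : Fin n) :
    M k k ≥ (1 / lapMat B k k) * (1 - (n : ℝ)⁻¹)^2 := by
  set L := lapMat B with hLdef
  have hLsym : Lᵀ = L := by
    ext i j
    by_cases h : i = j
    · subst h; rfl
    · show L j i = L i j
      simp only [hLdef, lapMat, Matrix.of_apply, if_neg h, if_neg (Ne.symm h)]
      rw [hsym.apply]
  -- symmetry of M
  have hMsym : Mᵀ = M := mp_unique L Mᵀ M (mp_transpose L M hLsym hM) hM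
  obtain ⟨h1, h2, h3, h4⟩ := hM
  -- positivity of L k k
  have hnR : (2:ℝ) ≤ (n:ℝ) := by exact_mod_cast hn
  have hnpos : (0:ℝ) < n := by linarith
  have hLkk : 0 < L k k := by
    obtain ⟨j, hj⟩ : ∃ j : Fin n, j ≠ k :=
      Fintype.exists_ne_of_one_lt_card (by simpa using by omega : 1 < Fintype.card (Fin n)) k
    obtain ⟨w⟩ := hconn.preconnected k j
    cases w with
    | nil => exact absurd rfl hj
    | @cons _ b _ h p =>
      rw [SimpleGraph.fromRel_adj] at h
      have hpos : 0 < B k b := by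
        rcases h.2 with hr | hr
        · exact hr
        · rw [← hsym.apply]; exact hr
      have hle : B k b ≤ ∑ l, B k l :=
        Finset.single_le_sum (fun i _ => hnonneg k i) (Finset.mem_univ b)
      have : L k k = ∑ l, B k l := by simp [hLdef, lapMat]
      rw [this]; linarith
  -- the projection P = 1 - M*L is a constant matrix
  set P : Matrix (Fin n) (Fin n) ℝ := 1 - M * L with hPdef
  have hLP : L * P = 0 := by
    rw [hPdef, mul_sub, mul_one, ← mul_assoc, h1, sub_self]
  have hPsym : Pᵀ = P := by
    rw [hPdef, Matrix.transpose_sub, Matrix.transpose_one, h4]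
  have hPidem : P * P = P := by
    have h5 : L * (M * L) = L := by rw [← mul_assoc, h1]
    have h6 : (M * L) * (M * L) = M * L := by
      rw [mul_assoc M L (M * L), h5]
    rw [hPdef, sub_mul, one_mul, mul_sub, mul_one, h6]
    abel
  have hcolconst : ∀ j i i' : Fin n, P i j = P i' j := by
    intro j
    have hcol : L *ᵥ (fun i => P i j) = 0 := by
      ext i'
      have h0 : (L * P) i' j = 0 := by rw [hLP]; rfl
      rw [Matrix.mul_apply] at h0
      simpa [Matrix.mulVec, dotProduct] using h0
    exact fun i i' => lap_ker B hsym hnonneg hconn _ hcol i i'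
  have hPconst : ∀ i j, P i j = P k k := by
    intro i j
    calc P i j = P k j := hcolconst j i k
    _ = P j k := by conv_lhs => rw [← hPsym, Matrix.transpose_apply]
    _ = P k k := hcolconst k j k
  set c : ℝ := P k k with hcdef
  have hnc : (n : ℝ) * c^2 = c := by
    have := congrFun (congrFun hPidem k) k
    rw [Matrix.mul_apply] at this
    have h7 : ∀ j : Fin n, P k j * P j k = c * c := by
      intro j; rw [hPconst k j, hPconst j k]
    rw [Finset.sum_congr rfl (fun j _ => h7 j)] at this
    simpa [Finset.sum_const, Finset.card_univ, sq, mul_assoc] using this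
  have hMLkk : (M * L) k k = 1 - c := by
    have h8 : P k k = 1 - (M * L) k k := by
      rw [hPdef]; simp [Matrix.sub_apply, Matrix.one_apply_eq]
    rw [hcdef, h8]; ring
  set g : ℝ := (M * L) k k with hgdef
  have hg : 1 - (n:ℝ)⁻¹ ≤ g := by
    have hcase : c = 0 ∨ (n:ℝ) * c = 1 := by
      have : c * ((n:ℝ) * c - 1) = 0 := by ring_nf; nlinarith [hnc]
      rcases mul_eq_zero.1 this with h | h
      · exact Or.inl h
      · right; linarith
    rcases hcase with h | h
    · rw [hMLkk, h]
      have : (n:ℝ)⁻¹ > 0 := by positivity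
      linarith
    · have : c = (n:ℝ)⁻¹ := by field_simp at h ⊢; linarith
      rw [hMLkk, this]
  have hg0 : 0 ≤ 1 - (n:ℝ)⁻¹ := by
    have : (n:ℝ)⁻¹ ≤ 1 := by
      rw [inv_le_one_iff₀]; right; linarith
    linarith
  -- Cauchy-Schwarz via the PSD quadratic form
  set e : Fin n → ℝ := Pi.single k 1 with hedef
  have entry : ∀ A : Matrix (Fin n) (Fin n) ℝ, e ⬝ᵥ (A *ᵥ e) = A k k := by
    intro A
    rw [hedef, single_dotProduct, Matrix.mulVec_single]
    simp
  have hstep : ∀ w : Fin n → ℝ, (M *ᵥ e) ⬝ᵥ w = e ⬝ᵥ (M *ᵥ w) := by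
    intro w
    have h' : M *ᵥ e = e ᵥ* M := by
      calc M *ᵥ e = Mᵀᵀ *ᵥ e := by rw [Matrix.transpose_transpose]
      _ = e ᵥ* Mᵀ := Matrix.mulVec_transpose _ _
      _ = e ᵥ* M := by rw [hMsym]
    rw [h', ← Matrix.dotProduct_mulVec]
  set a : Fin n → ℝ := M *ᵥ e with hadef
  have haLa : a ⬝ᵥ (L *ᵥ a) = M k k := by
    calc a ⬝ᵥ (L *ᵥ a) = e ⬝ᵥ (M *ᵥ (L *ᵥ (M *ᵥ e))) := hstep _
    _ = e ⬝ᵥ ((M * L * M) *ᵥ e) := by rw [Matrix.mulVec_mulVec, Matrix.mulVec_mulVec, mul_assoc]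
    _ = (M * L * M) k k := entry _
    _ = M k k := by rw [h2]
  have haLe : a ⬝ᵥ (L *ᵥ e) = g := by
    calc a ⬝ᵥ (L *ᵥ e) = e ⬝ᵥ (M *ᵥ (L *ᵥ e)) := hstep _
    _ = e ⬝ᵥ ((M * L) *ᵥ e) := by rw [Matrix.mulVec_mulVec]
    _ = g := entry _
  have hcomm : L * M = M * L := by
    have h' : (M * L)ᵀ = L * M := by rw [Matrix.transpose_mul, hLsym, hMsym]
    rw [← h', h4]
  have heLa : e ⬝ᵥ (L *ᵥ a) = g := by
    calc e ⬝ᵥ (L *ᵥ a) = e ⬝ᵥ ((L * M) *ᵥ e) := by rw [hadef, Matrix.mulVec_mulVec]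
    _ = (L * M) k k := entry _
    _ = g := by rw [hcomm]
  have heLe : e ⬝ᵥ (L *ᵥ e) = L k k := entry _
  set t : ℝ := g / L k k with htdef
  have hexp : (a - t • e) ⬝ᵥ (L *ᵥ (a - t • e))
      = M k k - 2 * t * g + t^2 * L k k := by
    rw [Matrix.mulVec_sub, Matrix.mulVec_smul, sub_dotProduct,
      dotProduct_sub, dotProduct_sub, smul_dotProduct,
      dotProduct_smul, dotProduct_smul, smul_dotProduct]
    rw [haLa, haLe, heLa, heLe]
    simp only [smul_eq_mul]
    ring
  have hpsd := lap_psd B hsym hnonneg (a - t • e)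
  rw [hexp] at hpsd
  have hLne : L k k ≠ 0 := ne_of_gt hLkk
  have hkey : g^2 / L k k ≤ M k k := by
    have ht2 : t^2 * L k k = g^2 / L k k := by
      rw [htdef]; field_simp
    have ht1 : 2 * t * g = 2 * (g^2 / L k k) := by
      rw [htdef]; field_simp
    rw [ht1, ht2] at hpsd
    linarith
  have hsq : (1 - (n:ℝ)⁻¹)^2 ≤ g^2 := by nlinarith
  have hdiv : (1 - (n:ℝ)⁻¹)^2 / L k k ≤ g^2 / L k k := by gcongr
  have hfin : (1 / L k k) * (1 - (n:ℝ)⁻¹)^2 = (1 - (n:ℝ)⁻¹)^2 / L k k := by ring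
  rw [ge_iff_le, hfin]
  linarith
end

section
/- Among all nonnegative edge-weight assignments b on the complete graph K_n summing to 1 for which the weighted graph is connected, the assignment that places weight 1/(n−1) on each edge incident to a fixed vertex k and weight 0 elsewhere minimizes the vulnerability measure M̂_k(b) = L(b)†_{kk}. -/
noncomputable def Jmat (n : ℕ) : Matrix (Fin n) (Fin n) ℝ := Matrix.of fun _ _ => (n : ℝ)⁻¹

/-- `M̂ₖ(B) = L(B)†ₖₖ`, via `L† = (L + 𝟙𝟙ᵀ/n)⁻¹ − 𝟙𝟙ᵀ/n` (valid on connected graphs). -/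
noncomputable def MhatB {n : ℕ} (k : Fin n) (B : Matrix (Fin n) (Fin n) ℝ) : ℝ :=
  (lapMat B + Jmat n)⁻¹ k k - (n : ℝ)⁻¹

/-- The uniform star centered at `k`: weight `1/(n−1)` on each edge incident to `k`,
weight `0` on every other edge of `Kₙ`. -/
noncomputable def starAt {n : ℕ} (k : Fin n) : Matrix (Fin n) (Fin n) ℝ :=
  Matrix.of fun i j => if i ≠ j ∧ (i = k ∨ j = k) then ((n : ℝ) - 1)⁻¹ else 0


section Aux

open Finset Matrix

variable {n : ℕ}

lemma sum_ite_const (k : Fin n) (b c : ℝ) :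
    ∑ i, (if i = k then b else c) = b + ((n:ℝ)-1)*c := by
  have h : ∀ i : Fin n, (if i = k then b else c) = c + (if i = k then b - c else 0) := by
    intro i; split <;> ring
  simp_rw [h, Finset.sum_add_distrib, Finset.sum_ite_eq' Finset.univ k,
    Finset.sum_const, Finset.card_univ, Fintype.card_fin, Finset.mem_univ, if_true,
    nsmul_eq_mul]
  ring

lemma quad_eq (B : Matrix (Fin n) (Fin n) ℝ) (hsym : ∀ i j, B j i = B i j)
    (hdiag : ∀ i, B i i = 0) (x : Fin n → ℝ) :
    x ⬝ᵥ ((lapMat B + Jmat n) *ᵥ x)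
      = (∑ i, ∑ j, B i j * (x i - x j)^2)/2 + (∑ i, x i)^2 * (n:ℝ)⁻¹ := by
  have hL : ∀ i j, x i * lapMat B i j * x j
      = (if j = i then (∑ m, B i m) * x i^2 else 0) - x i * B i j * x j := by
    intro i j
    by_cases h : i = j
    · subst h; simp [lapMat, hdiag i]; ring
    · simp only [lapMat, Matrix.of_apply, if_neg h, if_neg (Ne.symm h)]; ring
  have hdot : x ⬝ᵥ ((lapMat B + Jmat n) *ᵥ x)
      = ∑ i, ∑ j, (x i * lapMat B i j * x j + x i * (n:ℝ)⁻¹ * x j) := by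
    simp only [dotProduct, Matrix.mulVec, dotProduct, Matrix.add_apply,
      Jmat, Matrix.of_apply, Finset.mul_sum]
    refine Finset.sum_congr rfl fun i _ => Finset.sum_congr rfl fun j _ => by ring
  rw [hdot]
  simp_rw [Finset.sum_add_distrib, hL, Finset.sum_sub_distrib,
    Finset.sum_ite_eq' Finset.univ, Finset.mem_univ, if_true]
  have e1 : ∑ i, ∑ j, B i j * (x i - x j)^2
      = ∑ i, ∑ j, (B i j * x i^2 + B i j * x j^2 - 2 * (B i j * x i * x j)) := by
    refine Finset.sum_congr rfl fun i _ => Finset.sum_congr rfl fun j _ => by ring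
  have e2 : ∑ i, ∑ j, B i j * x j ^ 2 = ∑ i, (∑ m, B i m) * x i ^ 2 := by
    rw [Finset.sum_comm]
    refine Finset.sum_congr rfl fun j _ => ?_
    rw [Finset.sum_mul]
    exact Finset.sum_congr rfl fun i _ => by rw [hsym i j]
  have e3 : ∑ i, ∑ j, B i j * x i ^ 2 = ∑ i, (∑ m, B i m) * x i ^ 2 := by
    refine Finset.sum_congr rfl fun i _ => ?_
    rw [Finset.sum_mul]
  have e4 : (∑ i, x i)^2 = ∑ i, ∑ j, x i * x j := by
    rw [sq, Finset.sum_mul_sum]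
  have e5 : ∑ i, ∑ j, x i * B i j * x j = ∑ i, ∑ j, B i j * x i * x j :=
    Finset.sum_congr rfl fun i _ => Finset.sum_congr rfl fun j _ => by ring
  have e6 : ∑ i, ∑ j, x i * (n:ℝ)⁻¹ * x j = (∑ i, ∑ j, x i * x j) * (n:ℝ)⁻¹ := by
    rw [Finset.sum_mul]
    refine Finset.sum_congr rfl fun i _ => ?_
    rw [Finset.sum_mul]
    exact Finset.sum_congr rfl fun j _ => by ring
  have e7 : ∑ i, ∑ j, 2*(B i j * x i * x j) = 2 * ∑ i, ∑ j, B i j * x i * x j := by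
    simp_rw [← Finset.mul_sum]
  rw [e1]
  simp_rw [Finset.sum_sub_distrib, Finset.sum_add_distrib, e2, e3, e4, e5, e6, e7]
  ring

end Aux

section Aux2
open Finset Matrix

variable {n : ℕ}

lemma reachable_eq {V : Type*} {G : SimpleGraph V} (x : V → ℝ)
    (h : ∀ a b, G.Adj a b → x a = x b) {u v : V} (hr : G.Reachable u v) : x u = x v := by
  obtain ⟨w⟩ := hr
  induction w with
  | nil => rfl
  | cons ha _ ih => exact (h _ _ ha).trans ih

lemma quad_pos (hn : 0 < n) (B : Matrix (Fin n) (Fin n) ℝ)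
    (hsym : ∀ i j, B j i = B i j) (hnonneg : ∀ i j, 0 ≤ B i j) (hdiag : ∀ i, B i i = 0)
    (hconn : (SimpleGraph.fromRel (fun i j => 0 < B i j)).Connected)
    (x : Fin n → ℝ) (hx : x ≠ 0) : 0 < x ⬝ᵥ ((lapMat B + Jmat n) *ᵥ x) := by
  rw [quad_eq B hsym hdiag x]
  have h1 : 0 ≤ ∑ i, ∑ j, B i j * (x i - x j)^2 :=
    Finset.sum_nonneg fun i _ => Finset.sum_nonneg fun j _ =>
      mul_nonneg (hnonneg i j) (sq_nonneg _)
  have h2 : 0 ≤ (∑ i, x i)^2 * (n:ℝ)⁻¹ :=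
    mul_nonneg (sq_nonneg _) (by positivity)
  rcases lt_or_ge 0 ((∑ i, ∑ j, B i j * (x i - x j)^2)/2 + (∑ i, x i)^2 * (n:ℝ)⁻¹) with h | h
  · exact h
  exfalso
  have hz1 : ∑ i, ∑ j, B i j * (x i - x j)^2 = 0 := by nlinarith
  have hz2 : (∑ i, x i)^2 * (n:ℝ)⁻¹ = 0 := by nlinarith
  have hsum0 : ∑ i, x i = 0 := by
    have hninv : (0:ℝ) < (n:ℝ)⁻¹ := by positivity
    have := mul_eq_zero.mp hz2
    rcases this with h' | h'
    · exact pow_eq_zero_iff (by norm_num) |>.mp h'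
    · exact absurd h' (ne_of_gt hninv)
  have hterm : ∀ i j, B i j * (x i - x j)^2 = 0 := by
    intro i j
    have houter : ∀ i ∈ Finset.univ, (0:ℝ) ≤ ∑ j, B i j * (x i - x j)^2 :=
      fun i _ => Finset.sum_nonneg fun j _ => mul_nonneg (hnonneg i j) (sq_nonneg _)
    have hrow := (Finset.sum_eq_zero_iff_of_nonneg houter).mp hz1 i (Finset.mem_univ i)
    have hinner : ∀ j ∈ Finset.univ, (0:ℝ) ≤ B i j * (x i - x j)^2 :=
      fun j _ => mul_nonneg (hnonneg i j) (sq_nonneg _)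
    exact (Finset.sum_eq_zero_iff_of_nonneg hinner).mp hrow j (Finset.mem_univ j)
  have hadj : ∀ a b, (SimpleGraph.fromRel (fun i j => 0 < B i j)).Adj a b → x a = x b := by
    intro a b hab
    rw [SimpleGraph.fromRel_adj] at hab
    obtain ⟨-, hab⟩ := hab
    have key : ∀ p q : Fin n, 0 < B p q → x p = x q := by
      intro p q hpq
      have := hterm p q
      rcases mul_eq_zero.mp this with h' | h'
      · exact absurd h' (ne_of_gt hpq)
      · have := pow_eq_zero_iff (two_ne_zero) |>.mp h'
        linarith [sub_eq_zero.mp this]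
    rcases hab with h' | h'
    · exact key a b h'
    · exact (key b a h').symm
  set i0 : Fin n := ⟨0, hn⟩
  have hconst : ∀ i, x i = x i0 := fun i =>
    reachable_eq x hadj (hconn.preconnected i i0)
  have : (n:ℝ) * x i0 = 0 := by
    calc (n:ℝ) * x i0 = ∑ i : Fin n, x i0 := by
          rw [Finset.sum_const, Finset.card_univ, Fintype.card_fin, nsmul_eq_mul]
      _ = ∑ i, x i := Finset.sum_congr rfl fun i _ => (hconst i).symm
      _ = 0 := hsum0
  have hxi0 : x i0 = 0 := by
    have hn' : (n:ℝ) ≠ 0 := by positivity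
    exact (mul_eq_zero.mp this).resolve_left hn'
  exact hx (funext fun i => by rw [hconst i, hxi0]; rfl)

lemma det_unit (hn : 0 < n) (B : Matrix (Fin n) (Fin n) ℝ)
    (hsym : ∀ i j, B j i = B i j) (hnonneg : ∀ i j, 0 ≤ B i j) (hdiag : ∀ i, B i i = 0)
    (hconn : (SimpleGraph.fromRel (fun i j => 0 < B i j)).Connected) :
    IsUnit (lapMat B + Jmat n).det := by
  rw [isUnit_iff_ne_zero]
  intro h
  obtain ⟨v, hv, hMv⟩ := (Matrix.exists_mulVec_eq_zero_iff).mpr h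
  have hpos := quad_pos hn B hsym hnonneg hdiag hconn v hv
  rw [hMv] at hpos
  simp at hpos

lemma inv_diag_ge (M : Matrix (Fin n) (Fin n) ℝ) (hsym : Mᵀ = M)
    (hpsd : ∀ y, 0 ≤ y ⬝ᵥ (M *ᵥ y)) (hdet : IsUnit M.det) (k : Fin n) (x : Fin n → ℝ) :
    2 * x k - x ⬝ᵥ (M *ᵥ x) ≤ M⁻¹ k k := by
  set y := M⁻¹ *ᵥ (Pi.single k 1) with hy
  have hMy : M *ᵥ y = Pi.single k 1 := by
    rw [hy, Matrix.mulVec_mulVec, Matrix.mul_nonsing_inv _ hdet, Matrix.one_mulVec]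
  have hyMx : y ⬝ᵥ (M *ᵥ x) = x k := by
    rw [Matrix.dotProduct_mulVec, ← Matrix.mulVec_transpose, hsym, hMy,
      single_dotProduct, one_mul]
  have hxMy : x ⬝ᵥ (M *ᵥ y) = x k := by rw [hMy, dotProduct_single, mul_one]
  have hyMy : y ⬝ᵥ (M *ᵥ y) = M⁻¹ k k := by
    rw [hMy, dotProduct_single, mul_one, hy, Matrix.mulVec_single]; simp
  have h0 := hpsd (x - y)
  rw [Matrix.mulVec_sub, sub_dotProduct, dotProduct_sub,
    dotProduct_sub, hyMx, hxMy, hyMy] at h0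
  linarith

end Aux2

section Star
open Finset Matrix

variable {n : ℕ}

lemma n1pos (hn : 2 ≤ n) : (0:ℝ) < (n:ℝ) - 1 := by
  have : (2:ℝ) ≤ n := by exact_mod_cast hn
  linarith

lemma star_symm (k : Fin n) : (starAt k).IsSymm := by
  apply Matrix.IsSymm.ext
  intro i j
  simp only [starAt, Matrix.of_apply]
  have h : (j ≠ i ∧ (j = k ∨ i = k)) ↔ (i ≠ j ∧ (i = k ∨ j = k)) := by tauto
  rw [if_congr h rfl rfl]

lemma star_nonneg (hn : 2 ≤ n) (k : Fin n) : ∀ i j, 0 ≤ starAt k i j := by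
  intro i j
  simp only [starAt, Matrix.of_apply]
  split
  · exact inv_nonneg.mpr (le_of_lt (n1pos hn))
  · exact le_refl 0

lemma star_diag (k : Fin n) : ∀ i, starAt k i i = 0 := by
  intro i; simp [starAt]

lemma starAt_row (hn : 2 ≤ n) (k i : Fin n) :
    ∑ j, starAt k i j = if i = k then 1 else ((n:ℝ)-1)⁻¹ := by
  have hn1 := n1pos hn
  by_cases h : i = k
  · subst h
    have he : ∀ j, starAt i i j = if j = i then 0 else ((n:ℝ)-1)⁻¹ := by
      intro j
      simp only [starAt, Matrix.of_apply]
      by_cases hj : j = i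
      · subst hj; simp
      · rw [if_neg hj]
        split_ifs with h
        · rfl
        · exact (h ⟨fun h' => hj h'.symm, by tauto⟩).elim
    simp_rw [he]
    rw [sum_ite_const]
    simp [mul_inv_cancel₀ (ne_of_gt hn1)]
  · have he : ∀ j, starAt k i j = if j = k then ((n:ℝ)-1)⁻¹ else 0 := by
      intro j
      simp only [starAt, Matrix.of_apply]
      by_cases hj : j = k
      · subst hj
        have : i ≠ j ∧ (i = j ∨ j = j) := ⟨h, Or.inr rfl⟩
        rw [if_pos this, if_pos rfl]
      · have : ¬(i ≠ j ∧ (i = k ∨ j = k)) := by tauto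
        rw [if_neg this, if_neg hj]
    simp_rw [he]
    rw [sum_ite_const, if_neg h]
    ring

lemma starAt_sum (hn : 2 ≤ n) (k : Fin n) : ∑ i, ∑ j, starAt k i j = 2 := by
  have hn1 := n1pos hn
  simp_rw [starAt_row hn k]
  rw [sum_ite_const, mul_inv_cancel₀ (ne_of_gt hn1)]
  norm_num

lemma star_conn (hn : 2 ≤ n) (k : Fin n) :
    (SimpleGraph.fromRel (fun i j => 0 < starAt k i j)).Connected := by
  have hn1 := n1pos hn
  rw [SimpleGraph.connected_iff]
  have hadj : ∀ i : Fin n, i ≠ k →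
      (SimpleGraph.fromRel (fun i j => 0 < starAt k i j)).Adj i k := by
    intro i hi
    rw [SimpleGraph.fromRel_adj]
    refine ⟨hi, Or.inl ?_⟩
    have hval : starAt k i k = ((n:ℝ)-1)⁻¹ := by
      simp only [starAt, Matrix.of_apply]
      split_ifs with h
      · rfl
      · exact (h ⟨hi, by tauto⟩).elim
    rw [hval]
    exact inv_pos.mpr hn1
  have hreach : ∀ u : Fin n,
      (SimpleGraph.fromRel (fun i j => 0 < starAt k i j)).Reachable u k := by
    intro u
    by_cases h : u = k
    · rw [h]
    · exact (hadj u h).reachable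
  exact ⟨fun u v => (hreach u).trans (hreach v).symm, ⟨k⟩⟩

end Star

section Val
open Finset Matrix

variable {n : ℕ}

noncomputable def xvec (n : ℕ) (k : Fin n) : Fin n → ℝ :=
  fun i => ((n:ℝ)^2)⁻¹ + if i = k then ((n:ℝ)-1)/n else 0

lemma npos (hn : 2 ≤ n) : (0:ℝ) < n := by
  have : (2:ℝ) ≤ n := by exact_mod_cast hn
  linarith

lemma xvec_sum (hn : 2 ≤ n) (k : Fin n) : ∑ l, xvec n k l = 1 := by
  have hn0 := npos hn
  simp only [xvec]
  rw [Finset.sum_add_distrib, Finset.sum_const, Finset.card_univ, Fintype.card_fin,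
    nsmul_eq_mul, Finset.sum_ite_eq' Finset.univ, if_pos (Finset.mem_univ k)]
  field_simp
  ring

lemma two_ite_sum {i k : Fin n} (hik : i ≠ k) (b c : ℝ) :
    ∑ l, (if l = i then b else if l = k then c else 0) = b + c := by
  have h : ∀ l : Fin n, (if l = i then b else if l = k then c else 0)
      = (if l = i then b else 0) + (if l = k then c else 0) := by
    intro l
    by_cases h1 : l = i
    · subst h1; rw [if_pos rfl, if_pos rfl, if_neg hik, add_zero]
    · rw [if_neg h1, if_neg h1, zero_add]
  simp_rw [h, Finset.sum_add_distrib, Finset.sum_ite_eq' Finset.univ,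
    Finset.mem_univ, if_true]

lemma lap_apply_eq (B : Matrix (Fin n) (Fin n) ℝ) (i : Fin n) :
    lapMat B i i = ∑ m, B i m := by
  simp [lapMat]

lemma lap_apply_ne (B : Matrix (Fin n) (Fin n) ℝ) {i j : Fin n} (h : i ≠ j) :
    lapMat B i j = -B i j := by
  simp [lapMat, h]

lemma starAt_ne_k {k i l : Fin n} (hik : i ≠ k) (hil : i ≠ l) (hlk : l = k) :
    starAt k i l = ((n:ℝ)-1)⁻¹ := by
  simp only [starAt, Matrix.of_apply]
  split_ifs with h'
  · rfl
  · exact (h' ⟨hil, by tauto⟩).elim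

lemma starAt_center {k l : Fin n} (hlk : l ≠ k) : starAt k k l = ((n:ℝ)-1)⁻¹ := by
  simp only [starAt, Matrix.of_apply]
  split_ifs with h'
  · rfl
  · exact (h' ⟨fun h'' => hlk h''.symm, by tauto⟩).elim

lemma starAt_zero {k i l : Fin n} (hik : i ≠ k) (hlk : l ≠ k) :
    starAt k i l = 0 := by
  simp only [starAt, Matrix.of_apply]
  split_ifs with h'
  · exact absurd h'.2 (by tauto)
  · rfl

lemma star_mulVec (hn : 2 ≤ n) (k : Fin n) :
    (lapMat (starAt k) + Jmat n) *ᵥ xvec n k = Pi.single k 1 := by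
  have hn0 := npos hn
  have hn1 := n1pos hn
  funext i
  have hJ : (Jmat n *ᵥ xvec n k) i = (n:ℝ)⁻¹ := by
    simp only [Jmat, Matrix.mulVec, dotProduct, Matrix.of_apply]
    rw [← Finset.mul_sum, xvec_sum hn k, mul_one]
  have hsplit : ((lapMat (starAt k) + Jmat n) *ᵥ xvec n k) i
      = (∑ l, lapMat (starAt k) i l * xvec n k l) + (n:ℝ)⁻¹ := by
    rw [Matrix.add_mulVec, Pi.add_apply, hJ]
    rfl
  rw [hsplit]
  by_cases h : i = k
  · subst h
    have he : ∀ l, lapMat (starAt i) i l * xvec n i l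
        = if l = i then (((n:ℝ)^2)⁻¹ + ((n:ℝ)-1)/n)
          else -((n:ℝ)-1)⁻¹ * ((n:ℝ)^2)⁻¹ := by
      intro l
      by_cases hl : l = i
      · subst hl
        rw [lap_apply_eq, starAt_row hn l l, if_pos rfl, one_mul, if_pos rfl]
        simp [xvec]
      · have hil : i ≠ l := fun h'' => hl h''.symm
        rw [lap_apply_ne _ hil, starAt_center hl, if_neg hl]
        have : xvec n i l = ((n:ℝ)^2)⁻¹ := by simp [xvec, hl]
        rw [this]
    simp_rw [he]
    rw [sum_ite_const, Pi.single_eq_same]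
    field_simp
    ring
  · have he : ∀ l, lapMat (starAt k) i l * xvec n k l
        = if l = i then ((n:ℝ)-1)⁻¹ * ((n:ℝ)^2)⁻¹
          else if l = k then -((n:ℝ)-1)⁻¹ * (((n:ℝ)^2)⁻¹ + ((n:ℝ)-1)/n) else 0 := by
      intro l
      by_cases hl : l = i
      · subst hl
        rw [lap_apply_eq, starAt_row hn k l, if_neg h, if_pos rfl]
        have : xvec n k l = ((n:ℝ)^2)⁻¹ := by simp [xvec, h]
        rw [this]
      · have hil : i ≠ l := fun h'' => hl h''.symm
        rw [lap_apply_ne _ hil, if_neg hl]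
        by_cases hlk : l = k
        · rw [starAt_ne_k h hil hlk, if_pos hlk]
          subst hlk
          simp [xvec]
        · rw [starAt_zero h hlk, if_neg hlk]
          ring
    simp_rw [he]
    rw [two_ite_sum h, Pi.single_eq_of_ne h]
    field_simp
    ring

end Val

section Final
open Finset Matrix

variable {n : ℕ}

lemma lap_symm (B : Matrix (Fin n) (Fin n) ℝ) (hsym : ∀ i j, B j i = B i j) :
    (lapMat B + Jmat n)ᵀ = lapMat B + Jmat n := by
  ext i j
  simp only [Matrix.transpose_apply, Matrix.add_apply, lapMat, Jmat, Matrix.of_apply]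
  by_cases h : i = j
  · subst h; rfl
  · rw [if_neg (fun h' => h h'.symm), if_neg h, hsym]

lemma quad_nonneg (B : Matrix (Fin n) (Fin n) ℝ) (hsym : ∀ i j, B j i = B i j)
    (hnonneg : ∀ i j, 0 ≤ B i j) (hdiag : ∀ i, B i i = 0) :
    ∀ y, 0 ≤ y ⬝ᵥ ((lapMat B + Jmat n) *ᵥ y) := by
  intro y
  rw [quad_eq B hsym hdiag]
  have h1 : 0 ≤ ∑ i, ∑ j, B i j * (y i - y j)^2 :=
    Finset.sum_nonneg fun i _ => Finset.sum_nonneg fun j _ =>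
      mul_nonneg (hnonneg i j) (sq_nonneg _)
  have h2 : 0 ≤ (∑ i, y i)^2 * (n:ℝ)⁻¹ := mul_nonneg (sq_nonneg _) (by positivity)
  linarith

lemma star_val (hn : 2 ≤ n) (k : Fin n) : MhatB k (starAt k) = (((n:ℝ)-1)/n)^2 := by
  have hn0 := npos hn
  have hn1 := n1pos hn
  have hdet := det_unit (by omega) (starAt k) (fun i j => (star_symm k).apply i j)
    (star_nonneg hn k) (star_diag k) (star_conn hn k)
  have hMx := star_mulVec hn k
  have hinv : (lapMat (starAt k) + Jmat n)⁻¹ *ᵥ Pi.single k 1 = xvec n k := by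
    rw [← hMx, Matrix.mulVec_mulVec, Matrix.nonsing_inv_mul _ hdet, Matrix.one_mulVec]
  have hkk : (lapMat (starAt k) + Jmat n)⁻¹ k k = xvec n k k := by
    have h2 := congrFun hinv k
    rw [Matrix.mulVec_single] at h2
    simpa using h2
  simp only [MhatB, hkk, xvec, if_pos rfl, if_true]
  field_simp
  ring

end Final

section Main
open Finset Matrix

/-- among all nonnegative symmetric edge-weight assignments on the complete
graph `Kₙ` summing to `1` (i.e. `∑ᵢ∑ⱼ Bᵢⱼ = 2`) for which the weighted graph is connected,
the uniform star centered at the fixed vertex `k` minimizes the vulnerability measure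
`M̂ₖ(B) = L(B)†ₖₖ`. -/
theorem stmt12 {n : ℕ} (hn : 2 ≤ n) (k : Fin n) :
    (starAt k).IsSymm ∧ (∀ i j, 0 ≤ starAt k i j) ∧ (∑ i, ∑ j, starAt k i j = 2) ∧
    (SimpleGraph.fromRel (fun i j => 0 < starAt k i j)).Connected ∧
    ∀ B : Matrix (Fin n) (Fin n) ℝ,
      B.IsSymm → (∀ i j, 0 ≤ B i j) → (∀ i, B i i = 0) → (∑ i, ∑ j, B i j = 2) →
      (SimpleGraph.fromRel (fun i j => 0 < B i j)).Connected →
      MhatB k (starAt k) ≤ MhatB k B := by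
  have hn0 := npos hn
  have hn1 := n1pos hn
  refine ⟨star_symm k, star_nonneg hn k, starAt_sum hn k, star_conn hn k, ?_⟩
  intro B hBs hBnn hBdiag hBsum hBconn
  have hsym : ∀ i j, B j i = B i j := fun i j => hBs.apply i j
  have hdet := det_unit (by omega) B hsym hBnn hBdiag hBconn
  have hMsym := lap_symm B hsym
  have hpsd := quad_nonneg B hsym hBnn hBdiag
  have key := inv_diag_ge (lapMat B + Jmat n) hMsym hpsd hdet k (xvec n k)
  have hc : (0:ℝ) ≤ ((n:ℝ)-1)/n := by positivity
  have hQ : xvec n k ⬝ᵥ ((lapMat B + Jmat n) *ᵥ xvec n k)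
      ≤ (((n:ℝ)-1)/n)^2 + (n:ℝ)⁻¹ := by
    rw [quad_eq B hsym hBdiag, xvec_sum hn k]
    have hb : ∀ i j, B i j * (xvec n k i - xvec n k j)^2
        ≤ B i j * (((n:ℝ)-1)/n)^2 := by
      intro i j
      apply mul_le_mul_of_nonneg_left _ (hBnn i j)
      have hdiff : xvec n k i - xvec n k j
          = (if i = k then ((n:ℝ)-1)/n else 0) - (if j = k then ((n:ℝ)-1)/n else 0) := by
        simp only [xvec]
        ring
      rw [hdiff]
      split_ifs <;> nlinarith [sq_nonneg (((n:ℝ)-1)/(n:ℝ))]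
    have hsum : ∑ i, ∑ j, B i j * (xvec n k i - xvec n k j)^2
        ≤ ∑ i, ∑ j, B i j * (((n:ℝ)-1)/n)^2 :=
      Finset.sum_le_sum fun i _ => Finset.sum_le_sum fun j _ => hb i j
    have heq : ∑ i, ∑ j, B i j * (((n:ℝ)-1)/n)^2 = 2 * (((n:ℝ)-1)/n)^2 := by
      simp_rw [← Finset.sum_mul]
      rw [hBsum]
    rw [one_pow]
    linarith
  have hxk : xvec n k k = ((n:ℝ)^2)⁻¹ + ((n:ℝ)-1)/n := by
    simp [xvec]
  have harith : (((n:ℝ)-1)/n)^2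
      ≤ 2 * xvec n k k - (((((n:ℝ)-1)/n)^2 + (n:ℝ)⁻¹)) - (n:ℝ)⁻¹ := by
    rw [hxk]
    have : 2 * (((n:ℝ)^2)⁻¹ + ((n:ℝ)-1)/n) - (((((n:ℝ)-1)/n)^2 + (n:ℝ)⁻¹)) - (n:ℝ)⁻¹
        = (((n:ℝ)-1)/n)^2 := by
      field_simp
      ring
    linarith
  rw [star_val hn k]
  simp only [MhatB]
  linarith

end Main
end

section
/- Let T be a tree on n vertices with m = n−1 edges, fix a vertex k, and for each edge l let a_l be the number of (unordered) vertex pairs whose unique path uses edge l, and a_l^k the number of vertices j whose unique path from k uses edge l. Then on the simplex of positive weights summing to 1, the vulnerability measure satisfies n² M̂_k(b) = Σ_l (n a_l^k − a_l)/b_l, and the weights b̄_l = (n a_l^k − a_l)^{1/2} / Σ_s (n a_s^k − a_s)^{1/2} minimize M̂_k over this simplex. -/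
open Classical in
/-- Weight matrix obtained from an edge-weight function `w` on a graph `G`. -/
noncomputable def BofW {n : ℕ} (G : SimpleGraph (Fin n)) (w : Sym2 (Fin n) → ℝ) :
    Matrix (Fin n) (Fin n) ℝ :=
  Matrix.of fun i j => if G.Adj i j then w s(i, j) else 0

/-- Effective resistance between `i` and `j` computed from the pseudoinverse `M`. -/
def resist {n : ℕ} (M : Matrix (Fin n) (Fin n) ℝ) (i j : Fin n) : ℝ :=
  M i i + M j j - 2 * M i j

/-- The vulnerability measure `M̂ₖ = n⁻¹ Σⱼ Ωⱼₖ − n⁻² Σ_{i<j} Ωᵢⱼ`. -/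
noncomputable def MhatM {n : ℕ} (M : Matrix (Fin n) (Fin n) ℝ) (k : Fin n) : ℝ :=
  (n : ℝ)⁻¹ * (∑ j, resist M j k)
    - ((n : ℝ)^2)⁻¹ * (∑ i, ∑ j, if i < j then resist M i j else 0)

open Classical in
/-- `aK G k e` : the number of vertices `j` whose unique path from `k` uses the edge `e`. -/
noncomputable def aK {n : ℕ} (G : SimpleGraph (Fin n)) (k : Fin n) (e : Sym2 (Fin n)) : ℕ :=
  (Finset.univ.filter fun j : Fin n =>
    ∀ p : G.Walk k j, p.IsPath → e ∈ p.edges).card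

open Classical in
/-- `aAll G e` : the number of unordered vertex pairs whose unique path uses the edge `e`. -/
noncomputable def aAll {n : ℕ} (G : SimpleGraph (Fin n)) (e : Sym2 (Fin n)) : ℕ :=
  (Finset.univ.filter fun q : Fin n × Fin n =>
    q.1 < q.2 ∧ ∀ p : G.Walk q.1 q.2, p.IsPath → e ∈ p.edges).card

/-! ### Auxiliary development -/

open Finset SimpleGraph

section TreePaths

variable {n : ℕ} {G : SimpleGraph (Fin n)}

/-- The canonical path between two vertices of a tree. -/
noncomputable def pth (hT : G.IsTree) (a b : Fin n) : G.Walk a b :=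
  (hT.existsUnique_path a b).choose

lemma pth_isPath (hT : G.IsTree) (a b : Fin n) : (pth hT a b).IsPath :=
  (hT.existsUnique_path a b).choose_spec.1

lemma pth_unique (hT : G.IsTree) {a b : Fin n} {p : G.Walk a b} (hp : p.IsPath) :
    p = pth hT a b :=
  (hT.existsUnique_path a b).choose_spec.2 p hp

lemma Uprop_iff (hT : G.IsTree) (a b : Fin n) (e : Sym2 (Fin n)) :
    (∀ p : G.Walk a b, p.IsPath → e ∈ p.edges) ↔ e ∈ (pth hT a b).edges := by
  constructor
  · intro h; exact h _ (pth_isPath hT a b)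
  · intro h p hp
    rw [pth_unique hT hp]; exact h

lemma pth_self (hT : G.IsTree) (a : Fin n) : pth hT a a = SimpleGraph.Walk.nil :=
  (pth_unique hT SimpleGraph.Walk.IsPath.nil).symm

lemma mem_pth_symm (hT : G.IsTree) {a b : Fin n} {e : Sym2 (Fin n)} :
    e ∈ (pth hT a b).edges ↔ e ∈ (pth hT b a).edges := by
  have h : ∀ x y : Fin n, e ∈ (pth hT x y).edges → e ∈ (pth hT y x).edges := by
    intro x y hm
    rw [← pth_unique hT ((pth_isPath hT x y).reverse)]
    simpa [SimpleGraph.Walk.edges_reverse] using hm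
  exact ⟨h a b, h b a⟩

lemma side_step (hT : G.IsTree) {u v r : Fin n} {e : Sym2 (Fin n)} (h : G.Adj u v)
    (hne : s(u, v) ≠ e) (hm : e ∈ (pth hT u r).edges) : e ∈ (pth hT v r).edges := by
  have hb : (SimpleGraph.Walk.cons h (pth hT v r)).bypass = pth hT u r :=
    pth_unique hT (SimpleGraph.Walk.bypass_isPath _)
  have hsub := SimpleGraph.Walk.edges_bypass_subset (SimpleGraph.Walk.cons h (pth hT v r))
  rw [hb] at hsub
  have h2 := hsub hm
  rw [SimpleGraph.Walk.edges_cons, List.mem_cons] at h2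
  rcases h2 with h2 | h2
  · exact absurd h2.symm hne
  · exact h2

lemma side_iff (hT : G.IsTree) {u v r : Fin n} {e : Sym2 (Fin n)} (h : G.Adj u v)
    (hne : s(u, v) ≠ e) : (e ∈ (pth hT u r).edges ↔ e ∈ (pth hT v r).edges) :=
  ⟨side_step hT h hne, side_step hT h.symm (by rwa [Sym2.eq_swap])⟩

lemma side_flip (hT : G.IsTree) {u v r : Fin n} (h : G.Adj u v) :
    (s(u, v) ∈ (pth hT u r).edges ↔ s(u, v) ∉ (pth hT v r).edges) := by
  constructor
  · intro hu hv
    have hvsup : v ∈ (pth hT u r).support :=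
      SimpleGraph.Walk.snd_mem_support_of_mem_edges _ hu
    have husup : u ∈ (pth hT v r).support :=
      SimpleGraph.Walk.fst_mem_support_of_mem_edges _ hv
    have h1 : (pth hT u r).dropUntil v hvsup = pth hT v r :=
      pth_unique hT ((pth_isPath hT u r).dropUntil hvsup)
    have h2 : (pth hT v r).dropUntil u husup = pth hT u r :=
      pth_unique hT ((pth_isPath hT v r).dropUntil husup)
    have e1 := SimpleGraph.Walk.take_spec (pth hT u r) hvsup
    have e2 := SimpleGraph.Walk.take_spec (pth hT v r) husup
    rw [h1] at e1; rw [h2] at e2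
    have l1 := congrArg SimpleGraph.Walk.length e1
    have l2 := congrArg SimpleGraph.Walk.length e2
    rw [SimpleGraph.Walk.length_append] at l1 l2
    have hz : ((pth hT u r).takeUntil v hvsup).length = 0 := by omega
    exact h.ne (SimpleGraph.Walk.eq_of_length_eq_zero hz)
  · intro hv
    by_contra hu
    set W := (pth hT u r).append (pth hT v r).reverse with hW
    have hWe : s(u, v) ∉ W.edges := by
      rw [hW, SimpleGraph.Walk.edges_append, SimpleGraph.Walk.edges_reverse]
      intro hmem
      rcases List.mem_append.1 hmem with h' | h'
      · exact hu h'
      · exact hv (List.mem_reverse.1 h')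
    have hb : W.bypass = pth hT u v := pth_unique hT W.bypass_isPath
    have hcons : SimpleGraph.Walk.cons h SimpleGraph.Walk.nil = pth hT u v :=
      pth_unique hT (by simp [SimpleGraph.Walk.cons_isPath_iff, h.ne])
    have hmem : s(u, v) ∈ (pth hT u v).edges := by
      rw [← hcons]; simp
    rw [← hb] at hmem
    exact hWe (SimpleGraph.Walk.edges_bypass_subset _ hmem)

lemma walk_avoid (hT : G.IsTree) {e : Sym2 (Fin n)} {a b : Fin n} (r : Fin n)
    (W : G.Walk a b) (he : e ∉ W.edges) :
    (e ∈ (pth hT a r).edges ↔ e ∈ (pth hT b r).edges) := by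
  induction W with
  | nil => exact Iff.rfl
  | @cons x y z h q ih =>
    rw [SimpleGraph.Walk.edges_cons] at he
    have h1 : s(x, y) ≠ e := fun hh => he (hh ▸ List.mem_cons_self)
    have h2 : e ∉ q.edges := fun hh => he (List.mem_cons_of_mem _ hh)
    exact (side_iff hT h h1).trans (ih h2)

lemma mem_path_xor (hT : G.IsTree) {e : Sym2 (Fin n)} {a b : Fin n} (r : Fin n)
    (he : e ∈ (pth hT a b).edges) :
    ¬(e ∈ (pth hT a r).edges ↔ e ∈ (pth hT b r).edges) := by
  have H : ∀ {x y : Fin n} (p : G.Walk x y), p.IsPath → e ∈ p.edges →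
      ¬(e ∈ (pth hT x r).edges ↔ e ∈ (pth hT y r).edges) := by
    intro x y p
    induction p with
    | nil => intro _ hep; simp at hep
    | @cons x y z h q ih =>
      intro hp hep
      by_cases hc : s(x, y) = e
      · subst hc
        have hq : s(x, y) ∉ q.edges := by
          have := hp.edges_nodup
          rw [SimpleGraph.Walk.edges_cons] at this
          exact (List.nodup_cons.1 this).1
        have h1 := side_flip hT (r := r) h
        have h2 := walk_avoid hT r q hq
        tauto
      · have h1 := side_iff hT (r := r) h hc
        have h2 : e ∈ q.edges := by
          rw [SimpleGraph.Walk.edges_cons, List.mem_cons] at hep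
          rcases hep with hep | hep
          · exact absurd hep.symm hc
          · exact hep
        intro hiff
        exact ih hp.of_cons h2 (h1.symm.trans hiff)
  exact H _ (pth_isPath hT a b) he

lemma card_filter_eq {α : Type*} [Fintype α] (P Q : α → Prop) [DecidablePred P]
    [DecidablePred Q] (h : ∀ a, P a ↔ Q a) :
    (Finset.univ.filter P).card = (Finset.univ.filter Q).card := by
  congr 1
  ext a
  simp [h a]

end TreePaths
section Counting

variable {n : ℕ} {G : SimpleGraph (Fin n)}

open Classical in
lemma aK_card (hT : G.IsTree) (k : Fin n) (e : Sym2 (Fin n)) :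
    aK G k e = (Finset.univ.filter fun v : Fin n => e ∈ (pth hT v k).edges).card := by
  unfold aK
  apply card_filter_eq
  intro j
  rw [Uprop_iff hT k j e]
  exact mem_pth_symm hT

open Classical in
lemma aAll_card (hT : G.IsTree) (k : Fin n) (e : Sym2 (Fin n)) :
    aAll G e = (Finset.univ.filter fun v : Fin n => e ∈ (pth hT v k).edges).card *
      (Finset.univ.filter fun v : Fin n => e ∉ (pth hT v k).edges).card := by
  classical
  set A := (Finset.univ.filter fun v : Fin n => e ∈ (pth hT v k).edges) with hA
  set Ac := (Finset.univ.filter fun v : Fin n => e ∉ (pth hT v k).edges) with hAc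
  rw [← Finset.card_product]
  unfold aAll
  apply Finset.card_bij (fun q _ => if e ∈ (pth hT q.1 k).edges then q else q.swap)
  · intro q hq
    rw [Finset.mem_filter] at hq
    obtain ⟨-, hlt, hU⟩ := hq
    have hm : e ∈ (pth hT q.1 q.2).edges := (Uprop_iff hT q.1 q.2 e).1 hU
    have hxor := mem_path_xor hT k hm
    by_cases h1 : e ∈ (pth hT q.1 k).edges
    · have h2 : e ∉ (pth hT q.2 k).edges := fun h2 => hxor ⟨fun _ => h2, fun _ => h1⟩
      rw [if_pos h1]
      exact Finset.mem_product.2 ⟨Finset.mem_filter.2 ⟨Finset.mem_univ _, h1⟩,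
        Finset.mem_filter.2 ⟨Finset.mem_univ _, h2⟩⟩
    · have h2 : e ∈ (pth hT q.2 k).edges := by
        by_contra h2
        exact hxor ⟨fun h => absurd h h1, fun h => absurd h h2⟩
      rw [if_neg h1]
      exact Finset.mem_product.2 ⟨Finset.mem_filter.2 ⟨Finset.mem_univ _, h2⟩,
        Finset.mem_filter.2 ⟨Finset.mem_univ _, h1⟩⟩
  · intro q1 h1 q2 h2 heq
    rw [Finset.mem_filter] at h1 h2
    have l1 := h1.2.1
    have l2 := h2.2.1
    split_ifs at heq with ha hb hb
    · exact heq
    · exfalso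
      have e1 : q1.1 = q2.2 := congrArg Prod.fst heq
      have e2 : q1.2 = q2.1 := congrArg Prod.snd heq
      rw [e1, e2] at l1
      exact absurd l1 (lt_asymm l2)
    · exfalso
      have e1 : q1.2 = q2.1 := congrArg Prod.fst heq
      have e2 : q1.1 = q2.2 := congrArg Prod.snd heq
      rw [e2, e1] at l1
      exact absurd l1 (lt_asymm l2)
    · have := congrArg Prod.swap heq
      simpa using this
  · intro b hb
    rw [Finset.mem_product] at hb
    obtain ⟨hb1, hb2⟩ := hb
    rw [Finset.mem_filter] at hb1 hb2
    have hne : b.1 ≠ b.2 := fun h => hb2.2 (h ▸ hb1.2)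
    have hxor : ¬(e ∈ (pth hT b.1 k).edges ↔ e ∈ (pth hT b.2 k).edges) :=
      fun hiff => hb2.2 (hiff.1 hb1.2)
    have hm : e ∈ (pth hT b.1 b.2).edges := by
      by_contra hnm
      exact hxor (walk_avoid hT k (pth hT b.1 b.2) hnm)
    rcases lt_or_gt_of_ne hne with hlt | hgt
    · refine ⟨b, Finset.mem_filter.2 ⟨Finset.mem_univ _, hlt, (Uprop_iff hT b.1 b.2 e).2 hm⟩, ?_⟩
      rw [if_pos hb1.2]
    · refine ⟨b.swap, Finset.mem_filter.2 ⟨Finset.mem_univ _, hgt, ?_⟩, ?_⟩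
      · exact (Uprop_iff hT b.2 b.1 e).2 ((mem_pth_symm hT).1 hm)
      · simp only [Prod.fst_swap]
        rw [if_neg hb2.2]
        exact Prod.swap_swap b

open Classical in
lemma cpos (hT : G.IsTree) (hn : 2 ≤ n) (k : Fin n) {e : Sym2 (Fin n)}
    (he : e ∈ G.edgeFinset) : 0 < (n : ℝ) * aK G k e - aAll G e := by
  classical
  set A := (Finset.univ.filter fun v : Fin n => e ∈ (pth hT v k).edges) with hA
  set Ac := (Finset.univ.filter fun v : Fin n => e ∉ (pth hT v k).edges) with hAc
  have hK : aK G k e = A.card := aK_card hT k e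
  have hAll : aAll G e = A.card * Ac.card := aAll_card hT k e
  have hsum : A.card + Ac.card = n := by
    rw [hA, hAc, Finset.card_filter_add_card_filter_not, Finset.card_univ,
      Fintype.card_fin]
  have hA1 : 1 ≤ A.card := by
    rw [SimpleGraph.mem_edgeFinset] at he
    induction e using Sym2.ind with
    | _ u v =>
      rw [SimpleGraph.mem_edgeSet] at he
      have := side_flip hT (r := k) he
      rcases Classical.em (s(u, v) ∈ (pth hT u k).edges) with h | h
      · exact Finset.card_pos.2 ⟨u, Finset.mem_filter.2 ⟨Finset.mem_univ _, h⟩⟩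
      · have h2 : s(u, v) ∈ (pth hT v k).edges := by
          by_contra h2
          exact h (this.2 h2)
        exact Finset.card_pos.2 ⟨v, Finset.mem_filter.2 ⟨Finset.mem_univ _, h2⟩⟩
  rw [hK, hAll]
  have hc1 : (1 : ℝ) ≤ (A.card : ℝ) := by exact_mod_cast hA1
  have hc2 : (A.card : ℝ) + (Ac.card : ℝ) = (n : ℝ) := by exact_mod_cast hsum
  push_cast
  nlinarith [hc1, hc2]

end Counting
section MatrixPart
open Matrix

variable {n : ℕ} {G : SimpleGraph (Fin n)}

lemma transpose_triple (A B C : Matrix (Fin n) (Fin n) ℝ) :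
    (A * B * C)ᵀ = Cᵀ * Bᵀ * Aᵀ := by
  rw [Matrix.transpose_mul, Matrix.transpose_mul, Matrix.mul_assoc]

lemma mp_eq {L M M' : Matrix (Fin n) (Fin n) ℝ} (h : IsMoorePenrose L M)
    (h' : IsMoorePenrose L M') : M = M' := by
  obtain ⟨h1, h2, h3, h4⟩ := h
  obtain ⟨h1', h2', h3', h4'⟩ := h'
  have e1 : L * M = L * M' := by
    calc L * M = (L * M)ᵀ := h3.symm
      _ = Mᵀ * Lᵀ := Matrix.transpose_mul _ _
      _ = Mᵀ * (L * M' * L)ᵀ := by rw [h1']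
      _ = Mᵀ * (Lᵀ * M'ᵀ * Lᵀ) := by rw [transpose_triple]
      _ = (Mᵀ * Lᵀ) * (M'ᵀ * Lᵀ) := by simp only [Matrix.mul_assoc]
      _ = (L * M)ᵀ * (L * M')ᵀ := by rw [Matrix.transpose_mul, Matrix.transpose_mul]
      _ = (L * M) * (L * M') := by rw [h3, h3']
      _ = (L * M * L) * M' := by simp only [Matrix.mul_assoc]
      _ = L * M' := by rw [h1]
  have e2 : M * L = M' * L := by
    calc M * L = (M * L)ᵀ := h4.symm
      _ = Lᵀ * Mᵀ := Matrix.transpose_mul _ _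
      _ = (L * M' * L)ᵀ * Mᵀ := by rw [h1']
      _ = (Lᵀ * M'ᵀ * Lᵀ) * Mᵀ := by rw [transpose_triple]
      _ = (Lᵀ * M'ᵀ) * (Lᵀ * Mᵀ) := by simp only [Matrix.mul_assoc]
      _ = (M' * L)ᵀ * (M * L)ᵀ := by rw [Matrix.transpose_mul, Matrix.transpose_mul]
      _ = (M' * L) * (M * L) := by rw [h4, h4']
      _ = M' * (L * M * L) := by simp only [Matrix.mul_assoc]
      _ = M' * L := by rw [h1]
  calc M = M * L * M := h2.symm
    _ = M * L * M' := by rw [Matrix.mul_assoc, e1, ← Matrix.mul_assoc]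
    _ = M' * L * M' := by rw [e2]
    _ = M' := h2'

lemma mp_symm {L M : Matrix (Fin n) (Fin n) ℝ} (hL : Lᵀ = L)
    (h : IsMoorePenrose L M) : Mᵀ = M := by
  obtain ⟨h1, h2, h3, h4⟩ := h
  have hmp : IsMoorePenrose L Mᵀ := by
    refine ⟨?_, ?_, ?_, ?_⟩
    · have := congrArg Matrix.transpose h1
      rw [transpose_triple, hL] at this
      exact this
    · have := congrArg Matrix.transpose h2
      rw [transpose_triple, hL] at this
      exact this
    · have hlm : (L * Mᵀ)ᵀ = M * L := by
        rw [Matrix.transpose_mul, Matrix.transpose_transpose, hL]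
      rw [hlm]
      calc M * L = (M * L)ᵀ := h4.symm
        _ = Lᵀ * Mᵀ := Matrix.transpose_mul _ _
        _ = L * Mᵀ := by rw [hL]
    · have hml : (Mᵀ * L)ᵀ = L * M := by
        rw [Matrix.transpose_mul, Matrix.transpose_transpose, hL]
      rw [hml]
      calc L * M = (L * M)ᵀ := h3.symm
        _ = Mᵀ * Lᵀ := Matrix.transpose_mul _ _
        _ = Mᵀ * L := by rw [hL]
  exact mp_eq hmp ⟨h1, h2, h3, h4⟩

lemma BofW_symm (w : Sym2 (Fin n) → ℝ) (u v : Fin n) : BofW G w u v = BofW G w v u := by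
  simp only [BofW, Matrix.of_apply]
  by_cases h : G.Adj u v
  · rw [if_pos h, if_pos h.symm, Sym2.eq_swap]
  · rw [if_neg h, if_neg fun h' => h h'.symm]

lemma BofW_diag (w : Sym2 (Fin n) → ℝ) (v : Fin n) : BofW G w v v = 0 := by
  simp [BofW]

lemma lap_symm_s14 (w : Sym2 (Fin n) → ℝ) : (lapMat (BofW G w))ᵀ = lapMat (BofW G w) := by
  ext u v
  simp only [Matrix.transpose_apply, lapMat, Matrix.of_apply]
  by_cases h : u = v
  · subst h; rfl
  · rw [if_neg h, if_neg (Ne.symm h), BofW_symm]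

lemma lap_mulVec_s14 (B : Matrix (Fin n) (Fin n) ℝ) (hB0 : ∀ v, B v v = 0) (y : Fin n → ℝ)
    (v : Fin n) : (lapMat B).mulVec y v = ∑ u, B v u * (y v - y u) := by
  simp only [Matrix.mulVec, dotProduct, lapMat, Matrix.of_apply]
  have hstep : ∀ u, (if v = u then ∑ t, B v t else -B v u) * y u
      = (if v = u then (∑ t, B v t) * y u else 0) - B v u * y u := by
    intro u
    by_cases h : v = u
    · subst h
      rw [if_pos rfl, if_pos rfl, hB0, zero_mul, sub_zero]
    · rw [if_neg h, if_neg h, zero_sub, neg_mul]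
  rw [Finset.sum_congr rfl fun u _ => hstep u, Finset.sum_sub_distrib,
    Finset.sum_ite_eq Finset.univ v fun u => (∑ t, B v t) * y u, if_pos (Finset.mem_univ v)]
  rw [Finset.sum_mul]
  simp only [mul_sub]
  rw [Finset.sum_sub_distrib]

end MatrixPart
section Bridge

open Matrix

variable {n : ℕ} {G : SimpleGraph (Fin n)}

open Classical in
lemma bridge (hT : G.IsTree) (w : Sym2 (Fin n) → ℝ) (hw : ∀ e ∈ G.edgeFinset, w e ≠ 0)
    {a c j : Fin n} (h : G.Adj a c) (ha : s(a, c) ∈ (pth hT a j).edges) (v : Fin n) :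
    (lapMat (BofW G w)).mulVec
        (fun u => if s(a, c) ∈ (pth hT u j).edges then (w s(a, c))⁻¹ else 0) v
      = (if v = a then 1 else 0) - (if v = c then 1 else 0) := by
  rw [lap_mulVec_s14 _ (BofW_diag w)]
  have hwac : w s(a, c) ≠ 0 := hw _ (SimpleGraph.mem_edgeFinset.2 h)
  have hc : s(a, c) ∉ (pth hT c j).edges := (side_flip hT h).1 ha
  have hgeq : ∀ u t : Fin n, G.Adj u t → s(u, t) ≠ s(a, c) →
      ((if s(a, c) ∈ (pth hT u j).edges then (w s(a, c))⁻¹ else 0) : ℝ)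
        = (if s(a, c) ∈ (pth hT t j).edges then (w s(a, c))⁻¹ else 0) :=
    fun u t hadj hne => if_congr (side_iff hT hadj hne) rfl rfl
  have hBat : BofW G w a c = w s(a, c) := by simp [BofW, h]
  by_cases hva : v = a
  · subst hva
    rw [Finset.sum_eq_single c]
    · rw [hBat, if_pos ha, if_neg hc, sub_zero, mul_inv_cancel₀ hwac, if_pos rfl,
        if_neg h.ne, sub_zero]
    · intro t _ htc
      by_cases hadj : G.Adj v t
      · have hne : s(v, t) ≠ s(v, c) := fun hh => htc (Sym2.congr_right.1 hh)
        rw [hgeq _ _ hadj hne, sub_self, mul_zero]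
      · simp [BofW, hadj]
    · intro habs; exact absurd (Finset.mem_univ c) habs
  · by_cases hvc : v = c
    · subst hvc
      rw [Finset.sum_eq_single a]
      · have hBca : BofW G w v a = w s(a, v) := by rw [← hBat, BofW_symm]
        rw [hBca, if_pos ha, if_neg hc, zero_sub, mul_neg, mul_inv_cancel₀ hwac,
          if_neg (Ne.symm h.ne), if_pos rfl, zero_sub]
      · intro t _ hta
        by_cases hadj : G.Adj v t
        · have hne : s(v, t) ≠ s(a, v) := by
            intro hh
            rcases Sym2.eq_iff.1 hh with ⟨h1, h2⟩ | ⟨h1, h2⟩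
            · exact h.ne (h1 ▸ h2 ▸ rfl)
            · exact hta h2
          rw [hgeq _ _ hadj hne, sub_self, mul_zero]
        · simp [BofW, hadj]
      · intro habs; exact absurd (Finset.mem_univ a) habs
    · rw [if_neg hva, if_neg hvc, sub_zero]
      apply Finset.sum_eq_zero
      intro t _
      by_cases hadj : G.Adj v t
      · have hne : s(v, t) ≠ s(a, c) := by
          intro hh
          rcases Sym2.eq_iff.1 hh with ⟨h1, h2⟩ | ⟨h1, h2⟩
          · exact hva h1
          · exact hvc h1
        rw [hgeq _ _ hadj hne, sub_self, mul_zero]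
      · simp [BofW, hadj]

open Classical in
lemma mulVec_aux (hT : G.IsTree) (w : Sym2 (Fin n) → ℝ)
    (hw : ∀ e ∈ G.edgeFinset, w e ≠ 0) (j : Fin n) :
    ∀ (a : Fin n) (p : G.Walk a j), p.IsPath → ∀ v,
      (lapMat (BofW G w)).mulVec
          (fun u => ∑ e ∈ G.edgeFinset,
            if e ∈ p.edges ∧ e ∈ (pth hT u j).edges then (w e)⁻¹ else 0) v
        = (if v = a then 1 else 0) - (if v = j then 1 else 0) := by
  intro a p
  induction p with
  | nil =>
    intro _ v
    simp [Matrix.mulVec, dotProduct]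
  | @cons a b j' h q ih =>
    intro hp v
    have hnotin : s(a, b) ∉ q.edges := by
      have := hp.edges_nodup
      rw [SimpleGraph.Walk.edges_cons] at this
      exact (List.nodup_cons.1 this).1
    have hdecomp : (fun u => ∑ e ∈ G.edgeFinset,
        if e ∈ (SimpleGraph.Walk.cons h q).edges ∧ e ∈ (pth hT u j').edges
          then (w e)⁻¹ else 0)
      = (fun u => ∑ e ∈ G.edgeFinset,
          if e ∈ q.edges ∧ e ∈ (pth hT u j').edges then (w e)⁻¹ else 0)
        + (fun u => if s(a, b) ∈ (pth hT u j').edges then (w s(a, b))⁻¹ else 0) := by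
      funext u
      simp only [Pi.add_apply]
      have hsplit : ∀ e ∈ G.edgeFinset,
          (if e ∈ (SimpleGraph.Walk.cons h q).edges ∧ e ∈ (pth hT u j').edges
            then (w e)⁻¹ else 0)
          = (if e ∈ q.edges ∧ e ∈ (pth hT u j').edges then (w e)⁻¹ else 0)
            + (if e = s(a, b) ∧ e ∈ (pth hT u j').edges then (w e)⁻¹ else 0) := by
        intro e _
        rw [SimpleGraph.Walk.edges_cons]
        by_cases h1 : e = s(a, b)
        · subst h1
          by_cases h3 : s(a, b) ∈ (pth hT u j').edges <;>
            simp [hnotin, h3, List.mem_cons]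
        · by_cases h2 : e ∈ q.edges <;> by_cases h3 : e ∈ (pth hT u j').edges <;>
            simp [h1, h2, h3, List.mem_cons]
      rw [Finset.sum_congr rfl hsplit, Finset.sum_add_distrib]
      congr 1
      rw [Finset.sum_eq_single (s(a, b))]
      · by_cases h3 : s(a, b) ∈ (pth hT u j').edges <;> simp [h3]
      · intro e _ hne
        rw [if_neg]
        intro hcon
        exact hne hcon.1
      · intro habs
        exact absurd (SimpleGraph.mem_edgeFinset.2 h) habs
    rw [hdecomp, Matrix.mulVec_add, Pi.add_apply]
    rw [ih hp.of_cons v]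
    have hab : s(a, b) ∈ (pth hT a j').edges := by
      rw [← pth_unique hT hp]
      simp
    rw [bridge hT w hw h hab v]
    ring
end Bridge
section Resist

open Matrix

variable {n : ℕ} {G : SimpleGraph (Fin n)}

open Classical in
lemma resist_eq (hT : G.IsTree) (w : Sym2 (Fin n) → ℝ) (hw : ∀ e ∈ G.edgeFinset, 0 < w e)
    {M : Matrix (Fin n) (Fin n) ℝ} (hM : IsMoorePenrose (lapMat (BofW G w)) M)
    (i j : Fin n) :
    resist M i j = ∑ e ∈ G.edgeFinset,
      if (∀ p : G.Walk i j, p.IsPath → e ∈ p.edges) then (w e)⁻¹ else 0 := by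
  set L := lapMat (BofW G w) with hLdef
  have hLsym : Lᵀ = L := lap_symm_s14 w
  have hMsym : Mᵀ = M := mp_symm hLsym hM
  set x : Fin n → ℝ := fun v => ∑ e ∈ G.edgeFinset,
    if e ∈ (pth hT i j).edges ∧ e ∈ (pth hT v j).edges then (w e)⁻¹ else 0 with hx
  set d : Fin n → ℝ := fun v => (if v = i then 1 else 0) - (if v = j then 1 else 0) with hd
  have hLx : L.mulVec x = d := by
    funext v
    exact mulVec_aux hT w (fun e he => (hw e he).ne') j i (pth hT i j) (pth_isPath hT i j) v
  have hMji : M j i = M i j := by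
    conv_lhs => rw [← hMsym]
    exact Matrix.transpose_apply M j i
  have key1 : d ⬝ᵥ M.mulVec d = resist M i j := by
    simp only [hd, dotProduct, Matrix.mulVec, resist, mul_sub, sub_mul, ite_mul,
      mul_ite, mul_one, mul_zero, one_mul, zero_mul, Finset.sum_sub_distrib,
      Finset.sum_ite_eq', Finset.mem_univ, if_true]
    rw [hMji]; ring
  have key2 : x ⬝ᵥ d = d ⬝ᵥ M.mulVec d := by
    conv_lhs => rw [← hLx, ← hM.1]
    rw [← Matrix.mulVec_mulVec, ← Matrix.mulVec_mulVec]
    rw [Matrix.dotProduct_mulVec, ← hLsym, Matrix.vecMul_transpose, hLsym, hLx]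
  have key3 : x ⬝ᵥ d = ∑ e ∈ G.edgeFinset,
      if e ∈ (pth hT i j).edges then (w e)⁻¹ else 0 := by
    simp only [hd, dotProduct, mul_sub, mul_ite, mul_one, mul_zero,
      Finset.sum_sub_distrib, Finset.sum_ite_eq', Finset.mem_univ, if_true]
    have hxj : x j = 0 := by
      rw [hx]
      apply Finset.sum_eq_zero
      intro e _
      rw [if_neg]
      intro hcon
      have := hcon.2
      rw [pth_self hT j] at this
      simp at this
    have hxi : x i = ∑ e ∈ G.edgeFinset,
        if e ∈ (pth hT i j).edges then (w e)⁻¹ else 0 := by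
      rw [hx]
      apply Finset.sum_congr rfl
      intro e _
      rw [if_congr (and_self_iff) rfl rfl]
    rw [hxj, hxi, sub_zero]
  rw [← key1, ← key2, key3]
  apply Finset.sum_congr rfl
  intro e _
  exact if_congr (Uprop_iff hT i j e).symm rfl rfl

end Resist
section Final

variable {n : ℕ} {G : SimpleGraph (Fin n)}

lemma sum_indicator_card {α : Type*} [Fintype α] (P : α → Prop) [DecidablePred P] (c : ℝ) :
    (∑ a, if P a then c else 0) = (Finset.univ.filter P).card * c := by
  rw [Finset.sum_ite, Finset.sum_const, Finset.sum_const_zero, add_zero, nsmul_eq_mul]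

open Classical in
lemma part1 (hT : G.IsTree) (hn : 2 ≤ n) (k : Fin n) (w : Sym2 (Fin n) → ℝ)
    (M : Matrix (Fin n) (Fin n) ℝ) (hw : ∀ e ∈ G.edgeFinset, 0 < w e)
    (hMP : IsMoorePenrose (lapMat (BofW G w)) M) :
    (n : ℝ)^2 * MhatM M k = ∑ e ∈ G.edgeFinset, ((n : ℝ) * aK G k e - aAll G e) / w e := by
  have hn0 : (n : ℝ) ≠ 0 := by
    have : (0 : ℝ) < (n : ℝ) := by exact_mod_cast Nat.lt_of_lt_of_le (by norm_num) hn
    exact this.ne'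
  have hX : ∑ j, resist M j k = ∑ e ∈ G.edgeFinset, (aK G k e : ℝ) * (w e)⁻¹ := by
    have h1 : ∀ j, resist M j k = ∑ e ∈ G.edgeFinset,
        if (∀ p : G.Walk j k, p.IsPath → e ∈ p.edges) then (w e)⁻¹ else 0 :=
      fun j => resist_eq hT w hw hMP j k
    rw [Finset.sum_congr rfl fun j _ => h1 j, Finset.sum_comm]
    apply Finset.sum_congr rfl
    intro e _
    rw [sum_indicator_card]
    congr 2
    unfold aK
    apply card_filter_eq
    intro j
    rw [Uprop_iff hT j k e, Uprop_iff hT k j e]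
    exact (mem_pth_symm hT).symm
  have hY : ∑ i, ∑ j, (if i < j then resist M i j else 0)
      = ∑ e ∈ G.edgeFinset, (aAll G e : ℝ) * (w e)⁻¹ := by
    have h1 : ∀ i j : Fin n, (if i < j then resist M i j else 0)
        = ∑ e ∈ G.edgeFinset, if i < j ∧ (∀ p : G.Walk i j, p.IsPath → e ∈ p.edges)
            then (w e)⁻¹ else 0 := by
      intro i j
      by_cases hij : i < j
      · rw [if_pos hij, resist_eq hT w hw hMP i j]
        apply Finset.sum_congr rfl
        intro e _
        exact if_congr (by simp [hij]) rfl rfl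
      · rw [if_neg hij]
        symm
        apply Finset.sum_eq_zero
        intro e _
        rw [if_neg (fun hcon => hij hcon.1)]
    calc ∑ i, ∑ j, (if i < j then resist M i j else 0)
        = ∑ i, ∑ e ∈ G.edgeFinset, ∑ j, (if i < j ∧
            (∀ p : G.Walk i j, p.IsPath → e ∈ p.edges) then (w e)⁻¹ else 0) := by
          apply Finset.sum_congr rfl
          intro i _
          rw [Finset.sum_congr rfl fun j _ => h1 i j]
          exact Finset.sum_comm
      _ = ∑ e ∈ G.edgeFinset, ∑ i, ∑ j, (if i < j ∧
            (∀ p : G.Walk i j, p.IsPath → e ∈ p.edges) then (w e)⁻¹ else 0) :=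
          Finset.sum_comm
      _ = ∑ e ∈ G.edgeFinset, (aAll G e : ℝ) * (w e)⁻¹ := by
          apply Finset.sum_congr rfl
          intro e _
          rw [← Finset.sum_product']
          rw [show (Finset.univ ×ˢ Finset.univ : Finset (Fin n × Fin n)) = Finset.univ from
            Finset.univ_product_univ]
          rw [sum_indicator_card]
          congr 2
  have hM : (n : ℝ)^2 * MhatM M k = (n : ℝ) * (∑ j, resist M j k)
      - ∑ i, ∑ j, (if i < j then resist M i j else 0) := by
    unfold MhatM
    field_simp
  rw [hM, hX, hY, Finset.mul_sum, ← Finset.sum_sub_distrib]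
  apply Finset.sum_congr rfl
  intro e _
  rw [div_eq_mul_inv]
  ring

end Final
open Classical in
/-- for a tree `T` on `n` vertices with `m = n−1` edges and a fixed vertex
`k`, on the simplex of positive edge weights summing to `1` one has
`n² M̂ₖ(b) = Σₗ (n aₗᵏ − aₗ)/bₗ`, and the weights
`b̄ₗ = (n aₗᵏ − aₗ)^{1/2} / Σₛ (n aₛᵏ − aₛ)^{1/2}` minimize `M̂ₖ` over this simplex. -/
theorem stmt14 {n : ℕ} (hn : 2 ≤ n) (G : SimpleGraph (Fin n)) (hT : G.IsTree) (k : Fin n) :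
    (∀ (w : Sym2 (Fin n) → ℝ) (M : Matrix (Fin n) (Fin n) ℝ),
      (∀ e ∈ G.edgeFinset, 0 < w e) → (∑ e ∈ G.edgeFinset, w e = 1) →
      IsMoorePenrose (lapMat (BofW G w)) M →
      (n : ℝ)^2 * MhatM M k
        = ∑ e ∈ G.edgeFinset, ((n : ℝ) * aK G k e - aAll G e) / w e) ∧
    (∀ (wbar : Sym2 (Fin n) → ℝ),
      (∀ e ∈ G.edgeFinset,
        wbar e = Real.sqrt ((n : ℝ) * aK G k e - aAll G e)
          / ∑ s ∈ G.edgeFinset, Real.sqrt ((n : ℝ) * aK G k s - aAll G s)) →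
      ∀ (w : Sym2 (Fin n) → ℝ) (M Mbar : Matrix (Fin n) (Fin n) ℝ),
      (∀ e ∈ G.edgeFinset, 0 < w e) → (∑ e ∈ G.edgeFinset, w e = 1) →
      IsMoorePenrose (lapMat (BofW G w)) M →
      IsMoorePenrose (lapMat (BofW G wbar)) Mbar →
      MhatM Mbar k ≤ MhatM M k) := by
  constructor
  · intro w M hw hsum hMP
    exact part1 hT hn k w M hw hMP
  · intro wbar hwbar w M Mbar hw hsum hMP hMPbar
    set c : Sym2 (Fin n) → ℝ := fun e => (n : ℝ) * aK G k e - aAll G e with hc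
    have hcpos : ∀ e ∈ G.edgeFinset, 0 < c e := fun e he => cpos hT hn k he
    set S : ℝ := ∑ s ∈ G.edgeFinset, Real.sqrt (c s) with hS
    have hEne : G.edgeFinset.Nonempty := by
      rw [← Finset.card_pos]
      have := hT.card_edgeFinset
      rw [Fintype.card_fin] at this
      omega
    have hSpos : 0 < S := Finset.sum_pos (fun e he => Real.sqrt_pos.2 (hcpos e he)) hEne
    have hwbar' : ∀ e ∈ G.edgeFinset, wbar e = Real.sqrt (c e) / S := fun e he => hwbar e he
    have hwbarpos : ∀ e ∈ G.edgeFinset, 0 < wbar e := fun e he => by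
      rw [hwbar' e he]
      exact div_pos (Real.sqrt_pos.2 (hcpos e he)) hSpos
    have hwbarsum : ∑ e ∈ G.edgeFinset, wbar e = 1 := by
      rw [Finset.sum_congr rfl hwbar', ← Finset.sum_div, ← hS, div_self hSpos.ne']
    have h1 := part1 hT hn k w M hw hMP
    have h2 := part1 hT hn k wbar Mbar hwbarpos hMPbar
    have hRHS2 : ∑ e ∈ G.edgeFinset, c e / wbar e = S * S := by
      have : ∀ e ∈ G.edgeFinset, c e / wbar e = Real.sqrt (c e) * S := by
        intro e he
        rw [hwbar' e he, div_div_eq_mul_div]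
        have h0 : Real.sqrt (c e) ≠ 0 := Real.sqrt_ne_zero'.2 (hcpos e he)
        rw [div_eq_iff h0]
        have hms := Real.mul_self_sqrt (hcpos e he).le
        have hce : c e = (n : ℝ) * aK G k e - aAll G e := rfl
        linear_combination (-S) * hms + (-S) * hce
      rw [Finset.sum_congr rfl this, ← Finset.sum_mul, ← hS]
    have hCS : S * S ≤ ∑ e ∈ G.edgeFinset, c e / w e := by
      have hcs := Finset.sum_mul_sq_le_sq_mul_sq G.edgeFinset
        (fun e => Real.sqrt (c e) / Real.sqrt (w e)) (fun e => Real.sqrt (w e))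
      have hl : ∑ e ∈ G.edgeFinset,
          (Real.sqrt (c e) / Real.sqrt (w e)) * Real.sqrt (w e) = S := by
        rw [hS]
        apply Finset.sum_congr rfl
        intro e he
        rw [div_mul_cancel₀ _ (Real.sqrt_ne_zero'.2 (hw e he))]
      have hr1 : ∑ e ∈ G.edgeFinset, (Real.sqrt (c e) / Real.sqrt (w e))^2
          = ∑ e ∈ G.edgeFinset, c e / w e := by
        apply Finset.sum_congr rfl
        intro e he
        rw [div_pow, Real.sq_sqrt (hcpos e he).le, Real.sq_sqrt (hw e he).le]
      have hr2 : ∑ e ∈ G.edgeFinset, (Real.sqrt (w e))^2 = 1 := by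
        rw [← hsum]
        apply Finset.sum_congr rfl
        intro e he
        exact Real.sq_sqrt (hw e he).le
      rw [hl, hr1, hr2, mul_one] at hcs
      calc S * S = S ^ 2 := (sq S).symm
        _ ≤ _ := hcs
    have hn2 : (0 : ℝ) < (n : ℝ)^2 := by
      have : (0 : ℝ) < (n : ℝ) := by exact_mod_cast Nat.lt_of_lt_of_le (by norm_num) hn
      positivity
    have hfin : (n : ℝ)^2 * MhatM Mbar k ≤ (n : ℝ)^2 * MhatM M k := by
      rw [h1, h2]
      calc ∑ e ∈ G.edgeFinset, c e / wbar e = S * S := hRHS2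
        _ ≤ ∑ e ∈ G.edgeFinset, c e / w e := hCS
    exact le_of_mul_le_mul_left hfin hn2
end
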